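/- Let A be a real m × n matrix, b ∈ ℝ^m, μ > 0, λ > 0 and θ > 0, and define the capped ℓ₁-regularized least squares objective F : ℝ^n → ℝ by F(x) := μ‖Ax − b‖² + λ·Σ_{i=1}^n min(|x_i|, θ). Then for every local minimizer x̄ of F there exist constants c > 0, ε > 0 and η > 0 such that for every x ∈ ℝ^n with ‖x − x̄‖ < ε and F(x̄) < F(x) < F(x̄) + η, every Fréchet subgradient ξ of F at x satisfies ‖ξ‖ ≥ c·(F(x) − F(x̄))^{1/2}. -/

import Mathlib

open scoped RealInnerProductSpace Topology

/-- `ξ` is a Fréchet subgradient of `F` at `x`: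
`liminf_{y → x, y ≠ x} (F y − F x − ⟪ξ, y − x⟫)/‖y − x‖ ≥ 0`. -/
def IsFrechetSubgradient {n : ℕ} (F : EuclideanSpace ℝ (Fin n) → ℝ)
    (x ξ : EuclideanSpace ℝ (Fin n)) : Prop :=
  0 ≤ Filter.liminf (fun y => (F y - F x - ⟪ξ, y - x⟫) / ‖y - x‖) (𝓝[≠] x)

open Filter Topology Finset

lemma liminf_path {E : Type*} [NormedAddCommGroup E] {x : E} {u : E → ℝ}
    (h0 : 0 ≤ Filter.liminf u (𝓝[≠] x)) (C : ℝ) (hC : ∀ᶠ y in 𝓝[≠] x, C ≤ u y)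
    {p : ℝ → E} (hp : Tendsto p (𝓝[>] (0:ℝ)) (𝓝[≠] x)) {l : ℝ}
    (hl : Tendsto (u ∘ p) (𝓝[>] (0:ℝ)) (𝓝 l)) : 0 ≤ l := by
  have hne : (𝓝[>] (0:ℝ)).NeBot := nhdsGT_neBot 0
  have hcb : IsCoboundedUnder (· ≥ ·) (map p (𝓝[>] (0:ℝ))) u := by
    have hb : IsBoundedUnder (· ≤ ·) (map p (𝓝[>] (0:ℝ))) u := by
      refine ⟨l + 1, ?_⟩
      rw [eventually_map]
      filter_upwards [hl.eventually_le_const (by linarith : l < l + 1)] with t ht using ht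
    exact hb.isCoboundedUnder_ge
  have h1 : liminf u (𝓝[≠] x) ≤ liminf u (map p (𝓝[>] (0:ℝ))) :=
    liminf_le_liminf_of_le hp ⟨C, hC⟩ hcb
  have h2 : liminf u (map p (𝓝[>] (0:ℝ))) = l := by
    rw [← Filter.liminf_comp]; exact hl.liminf_eq
  linarith

lemma frechet_slice {n : ℕ} {F : EuclideanSpace ℝ (Fin n) → ℝ} {x ξ : EuclideanSpace ℝ (Fin n)}
    (h : IsFrechetSubgradient F x ξ) {C : ℝ}
    (hC : ∀ᶠ y in 𝓝[≠] x, C ≤ (F y - F x - ⟪ξ, y - x⟫) / ‖y - x‖)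
    {w : EuclideanSpace ℝ (Fin n)} (hw : ‖w‖ = 1) {d : ℝ}
    (hd : HasDerivAt (fun t : ℝ => F (x + t • w)) d 0) : ⟪ξ, w⟫ = d := by
  set u : EuclideanSpace ℝ (Fin n) → ℝ := fun y => (F y - F x - ⟪ξ, y - x⟫) / ‖y - x‖ with hu
  have hw0 : w ≠ 0 := by intro h0; rw [h0, norm_zero] at hw; norm_num at hw
  set φ : ℝ → ℝ := fun t => F (x + t • w) with hφ
  have hslope : Tendsto (slope φ 0) (𝓝[≠] (0:ℝ)) (𝓝 d) := by
    have := hasDerivAt_iff_tendsto_slope.mp hd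
    simpa using this
  -- generic path lemma application
  have key : ∀ σ : ℝ, σ = 1 ∨ σ = -1 → 0 ≤ σ * (d - ⟪ξ, w⟫) := by
    intro σ hσ
    have hσ0 : σ ≠ 0 := by rcases hσ with h1 | h1 <;> rw [h1] <;> norm_num
    set p : ℝ → EuclideanSpace ℝ (Fin n) := fun s => x + (σ * s) • w with hp
    have hptend : Tendsto p (𝓝[>] (0:ℝ)) (𝓝[≠] x) := by
      rw [tendsto_nhdsWithin_iff]
      constructor
      · have : ContinuousAt p 0 := by fun_prop
        have h0 : p 0 = x := by simp [hp]
        rw [← h0]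
        exact this.tendsto.mono_left nhdsWithin_le_nhds
      · filter_upwards [self_mem_nhdsWithin] with s hs
        simp only [Set.mem_compl_iff, Set.mem_singleton_iff, hp]
        intro hcontra
        have : (σ * s) • w = 0 := by
          have := congrArg (fun z => z - x) hcontra
          simpa [add_sub_cancel_left] using this
        rcases smul_eq_zero.mp this with h1 | h1
        · exact (mul_ne_zero hσ0 (ne_of_gt hs)) h1
        · exact hw0 h1
    have hup : ∀ s : ℝ, 0 < s → u (p s) = σ * (slope φ 0 (σ * s) - ⟪ξ, w⟫) := by
      intro s hs
      have hns : ‖(σ * s) • w‖ = |σ * s| := by rw [norm_smul, hw, mul_one, Real.norm_eq_abs]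
      have habs : |σ * s| = s := by
        rcases hσ with h1 | h1 <;> rw [h1] <;> simp [abs_of_pos hs, abs_of_neg, hs, abs_of_nonneg hs.le]
      simp only [hu, hp, add_sub_cancel_left, hns, habs]
      rw [real_inner_smul_right]
      have : F (x + (σ * s) • w) = φ (σ * s) := rfl
      have hφ0 : F x = φ 0 := by simp [hφ]
      rw [this, hφ0, slope_def_field]
      field_simp
      rcases hσ with h1 | h1 <;> rw [h1] <;> ring
    have hlim : Tendsto (u ∘ p) (𝓝[>] (0:ℝ)) (𝓝 (σ * (d - ⟪ξ, w⟫))) := by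
      have hmul : Tendsto (fun s : ℝ => σ * s) (𝓝[>] (0:ℝ)) (𝓝[≠] (0:ℝ)) := by
        rw [tendsto_nhdsWithin_iff]
        constructor
        · have : Tendsto (fun s : ℝ => σ * s) (𝓝 0) (𝓝 (σ * 0)) := tendsto_const_nhds.mul tendsto_id
          simpa using this.mono_left nhdsWithin_le_nhds
        · filter_upwards [self_mem_nhdsWithin] with s hs
          simp only [Set.mem_compl_iff, Set.mem_singleton_iff]
          exact mul_ne_zero hσ0 (ne_of_gt hs)
      have h1 : Tendsto (fun s => σ * (slope φ 0 (σ * s) - ⟪ξ, w⟫)) (𝓝[>] (0:ℝ))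
          (𝓝 (σ * (d - ⟪ξ, w⟫))) := by
        exact (tendsto_const_nhds.mul (((hslope.comp hmul).sub tendsto_const_nhds)))
      refine h1.congr' ?_
      filter_upwards [self_mem_nhdsWithin] with s hs
      exact (hup s hs).symm
    exact liminf_path h C hC hptend hlim
  have k1 := key 1 (Or.inl rfl)
  have k2 := key (-1) (Or.inr rfl)
  rw [one_mul] at k1
  rw [neg_one_mul, neg_nonneg, sub_nonpos] at k2
  linarith


variable {m n : ℕ} (A : Matrix (Fin m) (Fin n) ℝ) (b : Fin m → ℝ) (μ lam θ : ℝ)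

lemma I1 (x xbar : EuclideanSpace ℝ (Fin n)) :
    (μ * ∑ j, (A.mulVec x j - b j) ^ 2 + lam * ∑ i, min |x i| θ)
      - (μ * ∑ j, (A.mulVec xbar j - b j) ^ 2 + lam * ∑ i, min |xbar i| θ)
    = μ * ∑ j, (A.mulVec (x - xbar) j) ^ 2
      + ∑ i, (2 * μ * ∑ j, (A.mulVec xbar j - b j) * A j i) * (x i - xbar i)
      + lam * ∑ i, (min |x i| θ - min |xbar i| θ) := by
  set Q := ∑ j, (A.mulVec xbar j - b j) ^ 2 with hQ
  set D := ∑ j, (A.mulVec (x - xbar) j) ^ 2 with hD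
  set Cr := ∑ j, (A.mulVec xbar j - b j) * A.mulVec (x - xbar) j with hCr
  have hmv : ∀ j, A.mulVec x j = A.mulVec xbar j + A.mulVec (x - xbar) j := by
    intro j
    have h : A.mulVec (xbar + (x - xbar)) = A.mulVec xbar + A.mulVec (x - xbar) :=
      A.mulVec_add xbar (x - xbar)
    have h2 := congrFun h j
    simpa using h2
  have hswap : ∑ i, (2 * μ * ∑ j, (A.mulVec xbar j - b j) * A j i) * (x i - xbar i)
      = 2 * μ * Cr := by
    have h1 : ∀ i ∈ Finset.univ (α := Fin n),
        (2 * μ * ∑ j, (A.mulVec xbar j - b j) * A j i) * (x i - xbar i)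
        = ∑ j, 2 * μ * ((A.mulVec xbar j - b j) * (A j i * (x i - xbar i))) := by
      intro i _
      rw [Finset.mul_sum, Finset.sum_mul]
      exact Finset.sum_congr rfl (fun j _ => by ring)
    rw [Finset.sum_congr rfl h1, Finset.sum_comm, hCr, Finset.mul_sum]
    refine Finset.sum_congr rfl (fun j _ => ?_)
    have hmv2 : A.mulVec (x - xbar) j = ∑ i, A j i * (x i - xbar i) := by
      simp [Matrix.mulVec, dotProduct]
    rw [hmv2, Finset.mul_sum, Finset.mul_sum]
  have hq : ∑ j, (A.mulVec x j - b j) ^ 2 = Q + D + 2 * Cr := by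
    have h1 : ∀ j ∈ Finset.univ (α := Fin m), (A.mulVec x j - b j) ^ 2
        = (A.mulVec xbar j - b j) ^ 2 + (A.mulVec (x - xbar) j) ^ 2
          + 2 * ((A.mulVec xbar j - b j) * A.mulVec (x - xbar) j) := by
      intro j _
      rw [hmv j]; ring
    rw [Finset.sum_congr rfl h1]
    simp only [Finset.sum_add_distrib, ← Finset.mul_sum, hQ, hD, hCr]
  have hpen : ∑ i, (min |x i| θ - min |xbar i| θ)
      = (∑ i, min |x i| θ) - ∑ i, min |xbar i| θ := Finset.sum_sub_distrib _ _
  rw [hswap, hq, hpen]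
  ring

lemma coord_add_single (x : EuclideanSpace ℝ (Fin n)) (i k : Fin n) (t : ℝ) :
    (x + t • EuclideanSpace.single i (1:ℝ)) k = x k + t * (if k = i then 1 else 0) := by
  simp [EuclideanSpace.single_apply]

lemma slice_form (x : EuclideanSpace ℝ (Fin n)) (i : Fin n) (t : ℝ) :
    (μ * ∑ j, (A.mulVec (x + t • EuclideanSpace.single i (1:ℝ)) j - b j) ^ 2
      + lam * ∑ k, min |(x + t • EuclideanSpace.single i (1:ℝ)) k| θ)
    = (μ * ∑ j, (A.mulVec x j - b j) ^ 2 + lam * ∑ k, min |x k| θ)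
      + (μ * ∑ j, (A j i) ^ 2) * t ^ 2
      + (2 * μ * ∑ j, (A.mulVec x j - b j) * A j i) * t
      + lam * (min |x i + t| θ - min |x i| θ) := by
  have key := I1 A b μ lam θ (x + t • EuclideanSpace.single i (1:ℝ)) x
  have hmv : A.mulVec (WithLp.ofLp (x + t • EuclideanSpace.single i (1:ℝ)) - WithLp.ofLp x)
      = fun j => t * A j i := by
    funext j
    simp [Matrix.mulVec, dotProduct, coord_add_single, mul_comm, Pi.single_apply]
  rw [hmv] at key
  have h1 : ∑ j, (t * A j i) ^ 2 = (∑ j, (A j i)^2) * t^2 := by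
    rw [Finset.sum_mul]
    exact Finset.sum_congr rfl (fun j _ => by ring)
  have h2 : ∑ k, (2 * μ * ∑ j, (A.mulVec x j - b j) * A j k)
        * ((x + t • EuclideanSpace.single i (1:ℝ)) k - x k)
      = (2 * μ * ∑ j, (A.mulVec x j - b j) * A j i) * t := by
    have hc : ∀ k, (x + t • EuclideanSpace.single i (1:ℝ)) k - x k
        = if k = i then t else 0 := by
      intro k
      rw [coord_add_single]
      by_cases h : k = i <;> simp [h]
    calc ∑ k, (2 * μ * ∑ j, (A.mulVec x j - b j) * A j k)
          * ((x + t • EuclideanSpace.single i (1:ℝ)) k - x k)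
        = ∑ k, (if k = i then (2 * μ * ∑ j, (A.mulVec x j - b j) * A j k) * t else 0) := by
          refine Finset.sum_congr rfl (fun k _ => ?_)
          rw [hc k]
          by_cases h : k = i <;> simp [h]
      _ = (2 * μ * ∑ j, (A.mulVec x j - b j) * A j i) * t := by
          rw [Finset.sum_ite_eq' Finset.univ i]
          simp
  have h3 : ∑ k, (min |(x + t • EuclideanSpace.single i (1:ℝ)) k| θ - min |x k| θ)
      = min |x i + t| θ - min |x i| θ := by
    have hc : ∀ k, min |(x + t • EuclideanSpace.single i (1:ℝ)) k| θ - min |x k| θ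
        = if k = i then min |x i + t| θ - min |x i| θ else 0 := by
      intro k
      rw [coord_add_single]
      by_cases h : k = i
      · subst h; simp
      · simp [h]
    rw [Finset.sum_congr rfl (fun k _ => hc k), Finset.sum_ite_eq' Finset.univ i]
    simp
  rw [h1, h2, h3] at key
  simp only [WithLp.ofLp_add, WithLp.ofLp_smul] at key ⊢
  linarith


variable {θ : ℝ}

-- derivative of the 1-d capped abs at a regular point
lemma min_abs_hasDeriv (a : ℝ) (hθ : 0 < θ) (ha0 : a ≠ 0) (haθ : |a| ≠ θ) :
    HasDerivAt (fun t : ℝ => min |a + t| θ)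
      (if |a| < θ then (if 0 < a then 1 else -1) else 0) 0 := by
  rcases lt_or_gt_of_ne haθ with hlt | hgt
  · rcases ha0.lt_or_gt with hneg | hpos
    · -- a < 0, -θ < a
      have h1 : -θ < a := by have := abs_lt.mp hlt; linarith [this.1]
      have hev : ∀ᶠ t in 𝓝 (0:ℝ), min |a + t| θ = -(a + t) := by
        have hb : ∀ᶠ t in 𝓝 (0:ℝ), |t - 0| < min (-a) (θ + a) := by
          apply eventually_abs_sub_lt
          simp only [lt_min_iff]
          constructor <;> linarith
        filter_upwards [hb] with t ht
        rw [sub_zero] at ht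
        have hta := abs_lt.mp (lt_of_lt_of_le ht (min_le_left _ _))
        have htb := abs_lt.mp (lt_of_lt_of_le ht (min_le_right _ _))
        have hat : a + t < 0 := by linarith [hta.2]
        rw [abs_of_neg hat]
        apply min_eq_left
        linarith [htb.1]
      have hd : HasDerivAt (fun t : ℝ => -(a + t)) (-1 : ℝ) 0 := by
        have := ((hasDerivAt_id (0:ℝ)).const_add a).neg
        exact this
      have := hd.congr_of_eventuallyEq hev
      simp only [hlt, if_pos, if_neg (not_lt.mpr hneg.le)]
      simpa [not_lt.mpr hneg.le] using this
    · have hev : ∀ᶠ t in 𝓝 (0:ℝ), min |a + t| θ = a + t := by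
        have hb : ∀ᶠ t in 𝓝 (0:ℝ), |t - 0| < min a (θ - a) := by
          apply eventually_abs_sub_lt
          simp only [lt_min_iff]
          have := abs_lt.mp hlt
          constructor <;> linarith [this.2]
        filter_upwards [hb] with t ht
        rw [sub_zero] at ht
        have hta := abs_lt.mp (lt_of_lt_of_le ht (min_le_left _ _))
        have htb := abs_lt.mp (lt_of_lt_of_le ht (min_le_right _ _))
        have hat : 0 < a + t := by linarith [hta.1]
        rw [abs_of_pos hat]
        apply min_eq_left
        linarith [htb.2]
      have hd : HasDerivAt (fun t : ℝ => a + t) (1 : ℝ) 0 :=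
        (hasDerivAt_id (0:ℝ)).const_add a
      have := hd.congr_of_eventuallyEq hev
      simpa [hlt, hpos] using this
  · have hev : ∀ᶠ t in 𝓝 (0:ℝ), min |a + t| θ = θ := by
      have hb : ∀ᶠ t in 𝓝 (0:ℝ), |t - 0| < |a| - θ := by
        apply eventually_abs_sub_lt; linarith
      filter_upwards [hb] with t ht
      rw [sub_zero] at ht
      apply min_eq_right
      have : |a| - |t| ≤ |a + t| := by
        have := abs_sub_abs_le_abs_sub a (-t)
        simpa [sub_neg_eq_add] using this
      linarith
    have hd : HasDerivAt (fun _ : ℝ => θ) (0 : ℝ) 0 := hasDerivAt_const 0 θ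
    have := hd.congr_of_eventuallyEq hev
    simpa [not_lt.mpr hgt.le] using this

variable {m n : ℕ} (A : Matrix (Fin m) (Fin n) ℝ) (b : Fin m → ℝ) {μ lam θ : ℝ}

lemma slice_hasDeriv (hθ : 0 < θ) (x : EuclideanSpace ℝ (Fin n)) (i : Fin n)
    (hx0 : x i ≠ 0) (hxθ : |x i| ≠ θ) :
    HasDerivAt (fun t : ℝ =>
        μ * ∑ j, (A.mulVec (x + t • EuclideanSpace.single i (1:ℝ)) j - b j) ^ 2
          + lam * ∑ k, min |(x + t • EuclideanSpace.single i (1:ℝ)) k| θ)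
      ((2 * μ * ∑ j, (A.mulVec x j - b j) * A j i)
        + lam * (if |x i| < θ then (if 0 < x i then 1 else -1) else 0)) 0 := by
  have hfun : (fun t : ℝ =>
      μ * ∑ j, (A.mulVec (x + t • EuclideanSpace.single i (1:ℝ)) j - b j) ^ 2
        + lam * ∑ k, min |(x + t • EuclideanSpace.single i (1:ℝ)) k| θ)
      = (fun t : ℝ =>
        ((μ * ∑ j, (A.mulVec x j - b j) ^ 2 + lam * ∑ k, min |x k| θ)
          + (μ * ∑ j, (A j i) ^ 2) * t ^ 2
          + (2 * μ * ∑ j, (A.mulVec x j - b j) * A j i) * t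
          - lam * min |x i| θ) + lam * min |x i + t| θ) := by
    funext t
    rw [slice_form A b μ lam θ x i t]
    ring
  rw [hfun]
  have h2 : HasDerivAt (fun t : ℝ => (μ * ∑ j, (A j i) ^ 2) * t ^ 2)
      ((μ * ∑ j, (A j i) ^ 2) * (2 * 0)) 0 := by
    have := (hasDerivAt_pow 2 (0:ℝ)).const_mul (μ * ∑ j, (A j i) ^ 2)
    simpa using this
  have h3 : HasDerivAt (fun t : ℝ => (2 * μ * ∑ j, (A.mulVec x j - b j) * A j i) * t)
      (2 * μ * ∑ j, (A.mulVec x j - b j) * A j i) 0 := by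
    have := (hasDerivAt_id (0:ℝ)).const_mul (2 * μ * ∑ j, (A.mulVec x j - b j) * A j i)
    simpa using this
  have h4 : HasDerivAt (fun t : ℝ => lam * min |x i + t| θ)
      (lam * (if |x i| < θ then (if 0 < x i then 1 else -1) else 0)) 0 :=
    (min_abs_hasDeriv (x i) hθ hx0 hxθ).const_mul lam
  have h5 := ((((hasDerivAt_const (0:ℝ)
      (μ * ∑ j, (A.mulVec x j - b j) ^ 2 + lam * ∑ k, min |x k| θ)).add h2).add
      h3).sub_const (lam * min |x i| θ)).add h4
  refine h5.congr_deriv ?_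
  ring

lemma abs_coord_le_norm (z : EuclideanSpace ℝ (Fin n)) (k : Fin n) : |z k| ≤ ‖z‖ := by
  rw [EuclideanSpace.norm_eq, ← Real.sqrt_sq_eq_abs]
  apply Real.sqrt_le_sqrt
  simpa [Real.norm_eq_abs, sq_abs] using
    Finset.single_le_sum (f := fun k => (z k)^2) (fun _ _ => sq_nonneg _) (Finset.mem_univ k)

lemma min_abs_lip (u v w : ℝ) : |min |u| w - min |v| w| ≤ |u - v| := by
  have h0 : |min |u| w - min |v| w| ≤ abs (|u| - |v|) := by
    rcases le_total (|u|) w with h1 | h1 <;> rcases le_total (|v|) w with h2 | h2 <;>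
      simp only [min_eq_left, min_eq_right, h1, h2] <;>
      rw [abs_le] <;> constructor <;>
      cases abs_cases (|u| - |v|) <;> linarith [abs_nonneg (|u| - |v|), le_abs_self (|u| - |v|), neg_abs_le (|u| - |v|)]
  exact h0.trans (abs_abs_sub_abs_le_abs_sub u v)

lemma frechet_lower_bound (hμ : 0 ≤ μ) (x ξ : EuclideanSpace ℝ (Fin n)) :
    ∃ C : ℝ, ∀ᶠ y : EuclideanSpace ℝ (Fin n) in 𝓝[≠] x,
      C ≤ ((μ * ∑ j, (A.mulVec y j - b j) ^ 2 + lam * ∑ k, min |y k| θ)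
            - (μ * ∑ j, (A.mulVec x j - b j) ^ 2 + lam * ∑ k, min |x k| θ)
            - ⟪ξ, y - x⟫) / ‖y - x‖ := by
  set L : ℝ := ∑ i, |2 * μ * ∑ j, (A.mulVec x j - b j) * A j i| + |lam| * n with hL
  refine ⟨-(L + ‖ξ‖), ?_⟩
  filter_upwards [self_mem_nhdsWithin] with y hy
  have hyx : y ≠ x := hy
  have hne : (0:ℝ) < ‖y - x‖ := by
    rw [norm_pos_iff]
    exact sub_ne_zero.mpr hyx
  rw [le_div_iff₀ hne]
  have hmu : μ * ∑ j, (A.mulVec (y - x) j) ^ 2 ≥ 0 :=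
    mul_nonneg hμ (Finset.sum_nonneg (fun j _ => sq_nonneg _))
  have hFdiff := I1 A b μ lam θ y x
  have hg : ∑ i, (2 * μ * ∑ j, (A.mulVec x j - b j) * A j i) * (y i - x i)
      ≥ -((∑ i, |2 * μ * ∑ j, (A.mulVec x j - b j) * A j i|) * ‖y - x‖) := by
    have h1 : |∑ i, (2 * μ * ∑ j, (A.mulVec x j - b j) * A j i) * (y i - x i)|
        ≤ (∑ i, |2 * μ * ∑ j, (A.mulVec x j - b j) * A j i|) * ‖y - x‖ := by
      calc |∑ i, (2 * μ * ∑ j, (A.mulVec x j - b j) * A j i) * (y i - x i)|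
          ≤ ∑ i, |(2 * μ * ∑ j, (A.mulVec x j - b j) * A j i) * (y i - x i)| :=
            Finset.abs_sum_le_sum_abs _ _
        _ ≤ ∑ i, |2 * μ * ∑ j, (A.mulVec x j - b j) * A j i| * ‖y - x‖ := by
            refine Finset.sum_le_sum (fun i _ => ?_)
            rw [abs_mul]
            refine mul_le_mul_of_nonneg_left ?_ (abs_nonneg _)
            have := abs_coord_le_norm (y - x) i
            simpa using this
        _ = (∑ i, |2 * μ * ∑ j, (A.mulVec x j - b j) * A j i|) * ‖y - x‖ :=
            (Finset.sum_mul _ _ _).symm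
    linarith [neg_abs_le (∑ i, (2 * μ * ∑ j, (A.mulVec x j - b j) * A j i) * (y i - x i))]
  have hpen : lam * ∑ i, (min |y i| θ - min |x i| θ) ≥ -(|lam| * n * ‖y - x‖) := by
    have h1 : |lam * ∑ i, (min |y i| θ - min |x i| θ)| ≤ |lam| * (n * ‖y - x‖) := by
      rw [abs_mul]
      refine mul_le_mul_of_nonneg_left ?_ (abs_nonneg _)
      calc |∑ i, (min |y i| θ - min |x i| θ)| ≤ ∑ i, |min |y i| θ - min |x i| θ| :=
            Finset.abs_sum_le_sum_abs _ _
        _ ≤ ∑ i : Fin n, ‖y - x‖ := by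
            refine Finset.sum_le_sum (fun i _ => ?_)
            refine (min_abs_lip (y i) (x i) θ).trans ?_
            have := abs_coord_le_norm (y - x) i
            simpa using this
        _ = n * ‖y - x‖ := by simp [Finset.sum_const, nsmul_eq_mul]
    have := neg_abs_le (lam * ∑ i, (min |y i| θ - min |x i| θ))
    nlinarith [this, h1]
  have hip : ⟪ξ, y - x⟫ ≤ ‖ξ‖ * ‖y - x‖ := real_inner_le_norm ξ (y - x)
  nlinarith [hmu, hg, hpen, hip, hFdiff, hne.le, norm_nonneg ξ]

lemma frechet_coord (hμ : 0 ≤ μ) (hθ : 0 < θ) (x ξ : EuclideanSpace ℝ (Fin n))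
    (h : IsFrechetSubgradient
      (fun y => μ * ∑ j, (A.mulVec y j - b j) ^ 2 + lam * ∑ k, min |y k| θ) x ξ)
    (i : Fin n) (hx0 : x i ≠ 0) (hxθ : |x i| ≠ θ) :
    ξ i = 2 * μ * ∑ j, (A.mulVec x j - b j) * A j i
      + lam * (if |x i| < θ then (if 0 < x i then 1 else -1) else 0) := by
  obtain ⟨C, hC⟩ := frechet_lower_bound A b (μ := μ) (lam := lam) (θ := θ) hμ x ξ
  have hw : ‖(EuclideanSpace.single i (1:ℝ))‖ = 1 := by
    rw [EuclideanSpace.norm_single]; norm_num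
  have hd := slice_hasDeriv A b (μ := μ) (lam := lam) hθ x i hx0 hxθ
  have hkey := frechet_slice h hC hw hd
  rw [← hkey]
  simp [EuclideanSpace.inner_single_right]

lemma nonneg_of_quadratic {β c δ : ℝ} (hδ : 0 < δ)
    (h : ∀ t : ℝ, 0 < t → t < δ → 0 ≤ β * t + c * t ^ 2) : 0 ≤ β := by
  by_contra hβ
  push_neg at hβ
  set t : ℝ := min (δ / 2) (-β / (2 * (|c| + 1))) with ht
  have hc1 : 0 < |c| + 1 := by positivity
  have htpos : 0 < t := by
    apply lt_min
    · linarith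
    · exact div_pos (by linarith) (by positivity)
  have htδ : t < δ := (min_le_left _ _).trans_lt (by linarith)
  have hct : |c| * t ≤ -β / 2 := by
    have h1 : t ≤ -β / (2 * (|c| + 1)) := min_le_right _ _
    have h2 : |c| * t ≤ |c| * (-β / (2 * (|c| + 1))) :=
      mul_le_mul_of_nonneg_left h1 (abs_nonneg c)
    have h3 : |c| * (-β / (2 * (|c| + 1))) = (-β / 2) * (|c| / (|c| + 1)) := by
      field_simp
    have h4 : |c| / (|c| + 1) ≤ 1 := by
      rw [div_le_one hc1]; linarith
    nlinarith [abs_nonneg c, h2, h3, h4, hβ]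
  have := h t htpos htδ
  have hc2 : c * t ^ 2 ≤ |c| * t * t := by
    have := le_abs_self c
    nlinarith [htpos.le]
  nlinarith [htpos]

lemma firstorder (hμ : 0 < μ) (hlam : 0 < lam) (hθ : 0 < θ)
    (xbar : EuclideanSpace ℝ (Fin n))
    (hmin : IsLocalMin
      (fun y : EuclideanSpace ℝ (Fin n) =>
        μ * ∑ j, (A.mulVec y j - b j) ^ 2 + lam * ∑ k, min |y k| θ) xbar) (i : Fin n) :
    |xbar i| ≠ θ
    ∧ (xbar i = 0 → |2 * μ * ∑ j, (A.mulVec xbar j - b j) * A j i| ≤ lam)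
    ∧ (xbar i ≠ 0 → |xbar i| < θ →
        2 * μ * (∑ j, (A.mulVec xbar j - b j) * A j i)
          + lam * (if 0 < xbar i then 1 else -1) = 0)
    ∧ (θ < |xbar i| → 2 * μ * (∑ j, (A.mulVec xbar j - b j) * A j i) = 0) := by
  set g : ℝ := 2 * μ * ∑ j, (A.mulVec xbar j - b j) * A j i with hg
  set a : ℝ := μ * ∑ j, (A j i) ^ 2 with ha
  obtain ⟨δ, hδpos, hδ⟩ : ∃ δ > 0, ∀ t : ℝ, |t| < δ →
      0 ≤ a * t ^ 2 + g * t + lam * (min |xbar i + t| θ - min |xbar i| θ) := by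
    obtain ⟨δ, hδpos, hδ⟩ := Metric.eventually_nhds_iff.mp hmin
    refine ⟨δ, hδpos, fun t ht => ?_⟩
    have hdist : dist (xbar + t • EuclideanSpace.single i (1:ℝ)) xbar < δ := by
      rw [dist_eq_norm]
      simpa [norm_smul, EuclideanSpace.norm_single] using ht
    have h1 := hδ hdist
    have h2 := slice_form A b μ lam θ xbar i t
    simp only at h1
    simp only [WithLp.ofLp_add, WithLp.ofLp_smul] at h1 h2
    rw [h2] at h1
    rw [← hg, ← ha] at h1
    linarith
  have key : ∀ σ κ δ' : ℝ, (σ = 1 ∨ σ = -1) → 0 < δ' →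
      (∀ t : ℝ, 0 < t → t < δ' → min |xbar i + σ * t| θ - min |xbar i| θ = κ * t) →
      0 ≤ g * σ + lam * κ := by
    intro σ κ δ' hσ hδ' hlin
    refine nonneg_of_quadratic (c := a) (δ := min δ δ') (lt_min hδpos hδ') ?_
    intro t ht0 htδ
    rw [lt_min_iff] at htδ
    have hσt : |σ * t| < δ := by
      have : |σ| = 1 := by rcases hσ with h | h <;> rw [h] <;> norm_num
      rw [abs_mul, this, one_mul, abs_of_pos ht0]
      exact htδ.1
    have h1 := hδ (σ * t) hσt
    rw [hlin t ht0 htδ.2] at h1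
    have hσ2 : σ ^ 2 = 1 := by rcases hσ with h | h <;> rw [h] <;> norm_num
    have hst : (σ * t) ^ 2 = t ^ 2 := by rw [mul_pow, hσ2, one_mul]
    rw [hst] at h1
    nlinarith [h1]
  -- now case analysis on xbar i
  rcases lt_trichotomy (xbar i) 0 with hx | hx | hx
  rotate_left
  · -- xbar i = 0
    have hmin0 : min |xbar i| θ = 0 := by rw [hx]; simp [hθ.le]
    have k1 : 0 ≤ g * 1 + lam * 1 := by
      refine key 1 1 θ (Or.inl rfl) hθ (fun t ht0 htθ => ?_)
      rw [hx]
      rw [(by ring : (0:ℝ) + 1 * t = t), abs_of_pos ht0, min_eq_left htθ.le]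
      simp [hθ.le]
    have k2 : 0 ≤ g * (-1) + lam * 1 := by
      refine key (-1) 1 θ (Or.inr rfl) hθ (fun t ht0 htθ => ?_)
      rw [hx]
      rw [(by ring : (0:ℝ) + -1 * t = -t), abs_neg, abs_of_pos ht0, min_eq_left htθ.le]
      simp [hθ.le]
    refine ⟨by rw [hx]; simpa using hθ.ne, fun _ => ?_, fun h0 _ => absurd hx h0, fun hgt => ?_⟩
    · rw [abs_le]; constructor <;> linarith
    · rw [hx] at hgt; simp at hgt; linarith
  · -- 0 < xbar i
    by_cases hxθ' : xbar i < θ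
    · -- 0 < xbar i < θ
      have hminx : min |xbar i| θ = xbar i := by
        rw [abs_of_pos hx]; exact min_eq_left hxθ'.le
      have k1 : 0 ≤ g * 1 + lam * 1 := by
        refine key 1 1 (θ - xbar i) (Or.inl rfl) (by linarith) (fun t ht0 htd => ?_)
        rw [hminx, one_mul, abs_of_pos (by linarith : (0:ℝ) < xbar i + t),
          min_eq_left (by linarith : xbar i + t ≤ θ)]
        ring
      have k2 : 0 ≤ g * (-1) + lam * (-1) := by
        refine key (-1) (-1) (xbar i) (Or.inr rfl) hx (fun t ht0 htd => ?_)
        rw [hminx, abs_of_pos (by nlinarith : (0:ℝ) < xbar i + -1 * t),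
          min_eq_left (by nlinarith : xbar i + -1 * t ≤ θ)]
        ring
      refine ⟨by rw [abs_of_pos hx]; exact hxθ'.ne, fun h0 => absurd h0 (by linarith),
        fun _ _ => ?_, fun hgt => absurd (abs_of_pos hx ▸ hgt) (by linarith)⟩
      rw [if_pos hx]
      linarith
    · push_neg at hxθ'
      rcases eq_or_lt_of_le hxθ' with heq | hgtθ
      · -- xbar i = θ : contradiction
        exfalso
        have hminx : min |xbar i| θ = θ := by rw [abs_of_pos hx, ← heq, min_self]
        have k1 : 0 ≤ g * 1 + lam * 0 := by
          refine key 1 0 θ (Or.inl rfl) hθ (fun t ht0 htd => ?_)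
          rw [hminx, one_mul, abs_of_pos (by linarith : (0:ℝ) < xbar i + t),
            min_eq_right (by linarith : θ ≤ xbar i + t)]
          ring
        have k2 : 0 ≤ g * (-1) + lam * (-1) := by
          refine key (-1) (-1) θ (Or.inr rfl) hθ (fun t ht0 htd => ?_)
          rw [hminx, abs_of_pos (by nlinarith : (0:ℝ) < xbar i + -1 * t),
            min_eq_left (by nlinarith : xbar i + -1 * t ≤ θ)]
          nlinarith [heq]
        nlinarith
      · -- θ < xbar i
        have hminx : min |xbar i| θ = θ := min_eq_right (by rw [abs_of_pos hx]; linarith)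
        have k1 : 0 ≤ g * 1 + lam * 0 := by
          refine key 1 0 θ (Or.inl rfl) hθ (fun t ht0 htd => ?_)
          rw [hminx, one_mul, abs_of_pos (by linarith : (0:ℝ) < xbar i + t),
            min_eq_right (by linarith : θ ≤ xbar i + t)]
          ring
        have k2 : 0 ≤ g * (-1) + lam * 0 := by
          refine key (-1) 0 (xbar i - θ) (Or.inr rfl) (by linarith) (fun t ht0 htd => ?_)
          rw [hminx, abs_of_pos (by nlinarith : (0:ℝ) < xbar i + -1 * t),
            min_eq_right (by nlinarith : θ ≤ xbar i + -1 * t)]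
          ring
        refine ⟨by rw [abs_of_pos hx]; exact hgtθ.ne', fun h0 => absurd h0 (by linarith),
          fun _ hlt => absurd hlt (by rw [abs_of_pos hx]; linarith), fun _ => by linarith⟩
  · -- xbar i < 0
    by_cases hxθ' : -θ < xbar i
    · -- -θ < xbar i < 0
      have hminx : min |xbar i| θ = -xbar i := by
        rw [abs_of_neg hx]; exact min_eq_left (by linarith)
      have k1 : 0 ≤ g * 1 + lam * (-1) := by
        refine key 1 (-1) (-xbar i) (Or.inl rfl) (by linarith) (fun t ht0 htd => ?_)
        rw [hminx, one_mul, abs_of_neg (by linarith : xbar i + t < 0),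
          min_eq_left (by linarith : -(xbar i + t) ≤ θ)]
        ring
      have k2 : 0 ≤ g * (-1) + lam * 1 := by
        refine key (-1) 1 (θ + xbar i) (Or.inr rfl) (by linarith) (fun t ht0 htd => ?_)
        rw [hminx, abs_of_neg (by nlinarith : xbar i + -1 * t < 0),
          min_eq_left (by nlinarith : -(xbar i + -1 * t) ≤ θ)]
        ring
      refine ⟨by rw [abs_of_neg hx]; intro hc; linarith, fun h0 => absurd h0 (by linarith),
        fun _ _ => ?_, fun hgt => absurd hgt (by rw [abs_of_neg hx]; linarith)⟩
      rw [if_neg (by linarith)]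
      linarith
    · push_neg at hxθ'
      rcases eq_or_lt_of_le hxθ' with heq | hltθ
      · -- xbar i = -θ : contradiction
        exfalso
        have hminx : min |xbar i| θ = θ := by rw [abs_of_neg hx, heq]; simp
        have k1 : 0 ≤ g * 1 + lam * (-1) := by
          refine key 1 (-1) θ (Or.inl rfl) hθ (fun t ht0 htd => ?_)
          rw [hminx, one_mul, abs_of_neg (by nlinarith : xbar i + t < 0),
            min_eq_left (by nlinarith : -(xbar i + t) ≤ θ)]
          nlinarith [heq]
        have k2 : 0 ≤ g * (-1) + lam * 0 := by
          refine key (-1) 0 θ (Or.inr rfl) hθ (fun t ht0 htd => ?_)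
          rw [hminx, abs_of_neg (by nlinarith : xbar i + -1 * t < 0),
            min_eq_right (by nlinarith : θ ≤ -(xbar i + -1 * t))]
          ring
        nlinarith
      · -- xbar i < -θ
        have hminx : min |xbar i| θ = θ := min_eq_right (by rw [abs_of_neg hx]; linarith)
        have k1 : 0 ≤ g * 1 + lam * 0 := by
          refine key 1 0 (-θ - xbar i) (Or.inl rfl) (by linarith) (fun t ht0 htd => ?_)
          rw [hminx, one_mul, abs_of_neg (by linarith : xbar i + t < 0),
            min_eq_right (by linarith : θ ≤ -(xbar i + t))]
          ring
        have k2 : 0 ≤ g * (-1) + lam * 0 := by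
          refine key (-1) 0 θ (Or.inr rfl) hθ (fun t ht0 htd => ?_)
          rw [hminx, abs_of_neg (by nlinarith : xbar i + -1 * t < 0),
            min_eq_right (by nlinarith : θ ≤ -(xbar i + -1 * t))]
          ring
        refine ⟨by rw [abs_of_neg hx]; intro hc; linarith, fun h0 => absurd h0 (by linarith),
          fun _ hlt => absurd hlt (by rw [abs_of_neg hx]; linarith), fun _ => by linarith⟩

lemma factor_bound {E F G : Type*} [NormedAddCommGroup E] [NormedSpace ℝ E]
    [NormedAddCommGroup F] [NormedSpace ℝ F] [NormedAddCommGroup G] [NormedSpace ℝ G]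
    [FiniteDimensional ℝ E] [FiniteDimensional ℝ F]
    (U : E →ₗ[ℝ] F) (V : E →ₗ[ℝ] G) (h : LinearMap.ker U ≤ LinearMap.ker V) :
    ∃ γ > (0:ℝ), ∀ z, γ * ‖V z‖ ≤ ‖U z‖ := by
  let W0 : LinearMap.range U →ₗ[ℝ] G :=
    (Submodule.liftQ (LinearMap.ker U) V h).comp
      (LinearMap.quotKerEquivRange U).symm.toLinearMap
  obtain ⟨q, hq⟩ := Submodule.exists_isCompl (LinearMap.range U)
  let pr : F →ₗ[ℝ] LinearMap.range U := Submodule.linearProjOfIsCompl _ q hq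
  let W : F →ₗ[ℝ] G := W0.comp pr
  have hW : ∀ z, W (U z) = V z := by
    intro z
    have hmem : U z ∈ LinearMap.range U := LinearMap.mem_range_self U z
    have h1 : pr (U z) = ⟨U z, hmem⟩ := by
      have := Submodule.linearProjOfIsCompl_apply_left hq ⟨U z, hmem⟩
      exact this
    show W0 (pr (U z)) = V z
    rw [h1]
    show (Submodule.liftQ (LinearMap.ker U) V h)
      ((LinearMap.quotKerEquivRange U).symm ⟨U z, hmem⟩) = V z
    rw [LinearMap.quotKerEquivRange_symm_apply_image U z hmem]
    exact Submodule.liftQ_apply _ V z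
  let Wc : F →L[ℝ] G := LinearMap.toContinuousLinearMap W
  refine ⟨1 / (‖Wc‖ + 1), by positivity, fun z => ?_⟩
  have h2 : ‖V z‖ ≤ (‖Wc‖ + 1) * ‖U z‖ := by
    have h3 : ‖W (U z)‖ ≤ ‖Wc‖ * ‖U z‖ := Wc.le_opNorm (U z)
    rw [hW z] at h3
    nlinarith [norm_nonneg (U z), norm_nonneg Wc]
  rw [div_mul_eq_mul_div, one_mul, div_le_iff₀ (by positivity)]
  calc ‖V z‖ ≤ (‖Wc‖ + 1) * ‖U z‖ := h2
    _ = ‖U z‖ * (‖Wc‖ + 1) := by ring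

lemma enorm_sq {k : ℕ} (z : EuclideanSpace ℝ (Fin k)) : ‖z‖ ^ 2 = ∑ i, (z i) ^ 2 := by
  rw [EuclideanSpace.norm_eq, Real.sq_sqrt (Finset.sum_nonneg (fun i _ => sq_nonneg _))]
  exact Finset.sum_congr rfl (fun i _ => by rw [Real.norm_eq_abs, sq_abs])

lemma gamma_bound : ∃ γ > (0:ℝ), ∀ S : Finset (Fin n), ∀ Δ : EuclideanSpace ℝ (Fin n),
    (∀ i ∉ S, Δ i = 0) →
    γ ^ 2 * (∑ j, (A.mulVec Δ j) ^ 2)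
      ≤ ∑ i ∈ S, (∑ j, (A.mulVec Δ j) * A j i) ^ 2 := by
  have hS : ∀ S : Finset (Fin n), ∃ γ > (0:ℝ), ∀ Δ : EuclideanSpace ℝ (Fin n),
      (∀ i ∉ S, Δ i = 0) →
      γ ^ 2 * (∑ j, (A.mulVec Δ j) ^ 2)
        ≤ ∑ i ∈ S, (∑ j, (A.mulVec Δ j) * A j i) ^ 2 := by
    intro S
    let P : EuclideanSpace ℝ (Fin n) →ₗ[ℝ] EuclideanSpace ℝ (Fin n) :=
      { toFun := fun z => WithLp.toLp 2 (fun i => if i ∈ S then z i else 0),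
        map_add' := by
          intro z w; ext i; by_cases h : i ∈ S <;>
            simp [h, PiLp.add_apply]
        map_smul' := by
          intro c z; ext i; by_cases h : i ∈ S <;>
            simp [h, PiLp.smul_apply, smul_eq_mul, mul_comm] }
    let MA : EuclideanSpace ℝ (Fin n) →ₗ[ℝ] EuclideanSpace ℝ (Fin m) :=
      { toFun := fun z => WithLp.toLp 2 (fun j => A.mulVec z j),
        map_add' := by
          intro z w; ext j
          show A.mulVec (z + w) j = A.mulVec z j + A.mulVec w j
          rw [A.mulVec_add]; rfl
        map_smul' := by
          intro c z; ext j
          show A.mulVec (c • z) j = c * A.mulVec z j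
          rw [A.mulVec_smul]; rfl }
    let MT : EuclideanSpace ℝ (Fin m) →ₗ[ℝ] EuclideanSpace ℝ (Fin n) :=
      { toFun := fun w => WithLp.toLp 2 (fun i => ∑ j, w j * A j i),
        map_add' := by
          intro z w; ext i
          show ∑ j, (z j + w j) * A j i = (∑ j, z j * A j i) + ∑ j, w j * A j i
          rw [← Finset.sum_add_distrib]
          exact Finset.sum_congr rfl (fun j _ => by ring)
        map_smul' := by
          intro c z; ext i
          show ∑ j, (c * z j) * A j i = c * ∑ j, z j * A j i
          rw [Finset.mul_sum]
          exact Finset.sum_congr rfl (fun j _ => by ring) }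
    have hker : LinearMap.ker ((P.comp MT).comp (MA.comp P))
        ≤ LinearMap.ker (MA.comp P) := by
      intro z hz
      rw [LinearMap.mem_ker] at hz ⊢
      have hz' : ∀ i, (if i ∈ S then (∑ j, A.mulVec (P z) j * A j i) else 0) = 0 := by
        intro i
        have := congrFun (congrArg (fun (v : EuclideanSpace ℝ (Fin n)) => (v : Fin n → ℝ)) hz) i
        simpa [P, MT, MA] using this
      have hsum : ∑ j, (A.mulVec (P z) j) ^ 2 = 0 := by
        have h1 : ∑ i, (if i ∈ S then (∑ j, A.mulVec (P z) j * A j i) else 0) * (P z) i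
            = ∑ j, (A.mulVec (P z) j) ^ 2 := by
          have h2 : ∀ i, (if i ∈ S then (∑ j, A.mulVec (P z) j * A j i) else 0) * (P z) i
              = ∑ j, A.mulVec (P z) j * (A j i * (P z) i) := by
            intro i
            by_cases h : i ∈ S
            · simp only [h, if_pos, Finset.sum_mul]
              exact Finset.sum_congr rfl (fun j _ => by ring)
            · have : (P z) i = 0 := by simp [P, h]
              simp [this, h]
          rw [Finset.sum_congr rfl (fun i _ => h2 i), Finset.sum_comm]
          refine Finset.sum_congr rfl (fun j _ => ?_)
          rw [← Finset.mul_sum]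
          have : A.mulVec (P z) j = ∑ i, A j i * (P z) i := by
            simp [Matrix.mulVec, dotProduct]
          rw [← this]; ring
        calc ∑ j, (A.mulVec (P z) j) ^ 2
            = ∑ i, (if i ∈ S then (∑ j, A.mulVec (P z) j * A j i) else 0) * (P z) i := h1.symm
          _ = 0 := by
              refine Finset.sum_eq_zero (fun i _ => ?_)
              rw [hz' i, zero_mul]
      have hzero : ∀ j, A.mulVec (P z) j = 0 := by
        intro j
        have := (Finset.sum_eq_zero_iff_of_nonneg (fun j _ => sq_nonneg _)).mp hsum j
          (Finset.mem_univ j)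
        exact pow_eq_zero_iff (by norm_num) |>.mp this
      ext j
      simpa [MA] using hzero j
    obtain ⟨γ, hγ0, hγ⟩ := factor_bound ((P.comp MT).comp (MA.comp P)) (MA.comp P) hker
    refine ⟨γ, hγ0, fun Δ hΔ => ?_⟩
    have hPΔ : P Δ = Δ := by
      ext i
      by_cases h : i ∈ S
      · simp [P, h]
      · simp [P, h, hΔ i h]
    have hkey := hγ Δ
    have hU : ‖((P.comp MT).comp (MA.comp P)) Δ‖ ^ 2
        = ∑ i ∈ S, (∑ j, (A.mulVec Δ j) * A j i) ^ 2 := by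
      rw [enorm_sq]
      have : ∀ i, (((P.comp MT).comp (MA.comp P)) Δ) i
          = if i ∈ S then (∑ j, A.mulVec Δ j * A j i) else 0 := by
        intro i
        have hfun : (fun i => if i ∈ S then Δ i else 0) = (Δ : Fin n → ℝ) :=
          funext (fun i => by by_cases h : i ∈ S <;> simp [h, hΔ i])
        simp [P, MT, MA, hfun]
      rw [Finset.sum_congr rfl (fun i _ => by rw [this i])]
      have hite : ∀ i : Fin n, (if i ∈ S then (∑ j, A.mulVec Δ j * A j i) else 0) ^ 2
          = if i ∈ S then (∑ j, A.mulVec Δ j * A j i) ^ 2 else 0 := by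
        intro i; by_cases h : i ∈ S <;> simp [h]
      rw [Finset.sum_congr rfl (fun i _ => hite i), Finset.sum_ite_mem, Finset.univ_inter]
    have hV : ‖(MA.comp P) Δ‖ ^ 2 = ∑ j, (A.mulVec Δ j) ^ 2 := by
      rw [enorm_sq]
      refine Finset.sum_congr rfl (fun j _ => ?_)
      simp [MA, hPΔ]
    have hsq : (γ * ‖(MA.comp P) Δ‖) ^ 2 ≤ ‖((P.comp MT).comp (MA.comp P)) Δ‖ ^ 2 := by
      apply sq_le_sq'
      · nlinarith [norm_nonneg ((MA.comp P) Δ), norm_nonneg (((P.comp MT).comp (MA.comp P)) Δ), hγ0]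
      · exact hkey
    rw [mul_pow] at hsq
    rw [hU, hV] at hsq
    exact hsq
  choose γf hγf0 hγf using hS
  have hne : (Finset.univ : Finset (Finset (Fin n))).Nonempty := ⟨∅, Finset.mem_univ _⟩
  refine ⟨Finset.univ.inf' hne γf, ?_, ?_⟩
  · simp only [gt_iff_lt]
    rw [Finset.lt_inf'_iff]
    exact fun S _ => hγf0 S
  · intro S Δ hΔ
    refine le_trans ?_ (hγf S Δ hΔ)
    apply mul_le_mul_of_nonneg_right ?_ (Finset.sum_nonneg (fun j _ => sq_nonneg _))
    have h1 : Finset.univ.inf' hne γf ≤ γf S := Finset.inf'_le _ (Finset.mem_univ S)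
    have h2 : 0 < Finset.univ.inf' hne γf := by
      rw [Finset.lt_inf'_iff]; exact fun S _ => hγf0 S
    nlinarith

set_option maxHeartbeats 2000000 in
/-- The capped ℓ₁-regularized least squares objective
`F(x) = μ‖Ax − b‖² + λ·Σᵢ min(|xᵢ|, θ)` satisfies the KL inequality with exponent
`1/2` around every local minimizer. -/
theorem cappedL1_LS_KL_exponent_half
    (m n : ℕ) (A : Matrix (Fin m) (Fin n) ℝ) (b : Fin m → ℝ)
    (μ lam θ : ℝ) (hμ : 0 < μ) (hlam : 0 < lam) (hθ : 0 < θ) :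
    let F : EuclideanSpace ℝ (Fin n) → ℝ :=
      fun x => μ * ∑ j, (A.mulVec x j - b j) ^ 2 + lam * ∑ i, min |x i| θ
    ∀ xbar : EuclideanSpace ℝ (Fin n), IsLocalMin F xbar →
      ∃ c > (0 : ℝ), ∃ ε > (0 : ℝ), ∃ η > (0 : ℝ),
        ∀ x : EuclideanSpace ℝ (Fin n),
          ‖x - xbar‖ < ε → F xbar < F x → F x < F xbar + η →
            ∀ ξ : EuclideanSpace ℝ (Fin n), IsFrechetSubgradient F x ξ →
              c * Real.sqrt (F x - F xbar) ≤ ‖ξ‖ := by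
  intro F xbar hmin
  classical
  have hminE : IsLocalMin (fun y : EuclideanSpace ℝ (Fin n) =>
      μ * ∑ j, (A.mulVec y j - b j) ^ 2 + lam * ∑ k, min |y k| θ) xbar := hmin
  -- first order conditions
  have FO := fun i => firstorder A b hμ hlam hθ xbar hminE i
  set g : Fin n → ℝ := fun i => 2 * μ * ∑ j, (A.mulVec xbar j - b j) * A j i with hgdef
  -- constant alpha
  set αs : Finset ℝ := insert (1:ℝ)
    (((Finset.univ : Finset (Fin n × Bool)).image
      (fun p => |g p.1 + lam * (if p.2 then 1 else -1)|)).erase 0) with hαs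
  have hαsne : αs.Nonempty := ⟨1, by simp [hαs]⟩
  set α : ℝ := αs.min' hαsne with hαdef
  have hα0 : 0 < α := by
    rw [hαdef, Finset.lt_min'_iff]
    intro y hy
    rw [hαs] at hy
    rcases Finset.mem_insert.mp hy with h | h
    · rw [h]; norm_num
    · obtain ⟨hy0, hyim⟩ := Finset.mem_erase.mp h
      obtain ⟨p, _, hp⟩ := Finset.mem_image.mp hyim
      rw [← hp]
      rw [← hp] at hy0
      exact (abs_nonneg _).lt_of_ne' hy0
  have hαle : ∀ i : Fin n, ∀ bb : Bool,
      g i + lam * (if bb then 1 else -1) ≠ 0 → α ≤ |g i + lam * (if bb then 1 else -1)| := by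
    intro i bb hne
    apply Finset.min'_le
    rw [hαs]
    apply Finset.mem_insert_of_mem
    rw [Finset.mem_erase]
    refine ⟨abs_ne_zero.mpr hne, Finset.mem_image.mpr ⟨(i, bb), Finset.mem_univ _, rfl⟩⟩
  -- Frobenius constant
  set NA2 : ℝ := ∑ i, ∑ j, (A j i) ^ 2 with hNA2
  have hNA2nn : 0 ≤ NA2 := Finset.sum_nonneg (fun i _ => Finset.sum_nonneg (fun j _ => sq_nonneg _))
  set Kf : ℝ := 2 * μ * Real.sqrt NA2 + 1 with hKf
  have hKf0 : 0 < Kf := by positivity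
  -- residual coordinate bound
  have hrb : ∀ (Δ : EuclideanSpace ℝ (Fin n)) (i : Fin n),
      |2 * μ * ∑ j, (A.mulVec Δ j) * A j i|
        ≤ Kf * Real.sqrt (∑ j, (A.mulVec Δ j) ^ 2) := by
    intro Δ i
    have hcs : (∑ j, (A.mulVec Δ j) * A j i) ^ 2
        ≤ (∑ j, (A.mulVec Δ j) ^ 2) * ∑ j, (A j i) ^ 2 :=
      Finset.sum_mul_sq_le_sq_mul_sq _ _ _
    have h1 : |∑ j, (A.mulVec Δ j) * A j i|
        ≤ Real.sqrt (∑ j, (A.mulVec Δ j) ^ 2) * Real.sqrt (∑ j, (A j i) ^ 2) := by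
      rw [← Real.sqrt_sq_eq_abs, ← Real.sqrt_mul (Finset.sum_nonneg (fun j _ => sq_nonneg _))]
      exact Real.sqrt_le_sqrt hcs
    have h2 : Real.sqrt (∑ j, (A j i) ^ 2) ≤ Real.sqrt NA2 := by
      apply Real.sqrt_le_sqrt
      rw [hNA2]
      exact Finset.single_le_sum (f := fun i => ∑ j, (A j i)^2)
        (fun _ _ => Finset.sum_nonneg (fun j _ => sq_nonneg _)) (Finset.mem_univ i)
    rw [abs_mul]
    have hμabs : |2 * μ| = 2 * μ := abs_of_pos (by linarith)
    rw [hμabs]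
    calc 2 * μ * |∑ j, (A.mulVec Δ j) * A j i|
        ≤ 2 * μ * (Real.sqrt (∑ j, (A.mulVec Δ j) ^ 2) * Real.sqrt NA2) := by
          apply mul_le_mul_of_nonneg_left _ (by linarith)
          calc |∑ j, (A.mulVec Δ j) * A j i|
              ≤ Real.sqrt (∑ j, (A.mulVec Δ j) ^ 2) * Real.sqrt (∑ j, (A j i) ^ 2) := h1
            _ ≤ Real.sqrt (∑ j, (A.mulVec Δ j) ^ 2) * Real.sqrt NA2 :=
                mul_le_mul_of_nonneg_left h2 (Real.sqrt_nonneg _)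
      _ = (2 * μ * Real.sqrt NA2) * Real.sqrt (∑ j, (A.mulVec Δ j) ^ 2) := by ring
      _ ≤ Kf * Real.sqrt (∑ j, (A.mulVec Δ j) ^ 2) := by
          apply mul_le_mul_of_nonneg_right _ (Real.sqrt_nonneg _)
          rw [hKf]; linarith
  -- gamma
  obtain ⟨γ, hγ0, hγ⟩ := gamma_bound A
  -- eta and c
  set η : ℝ := min 1 (μ * α ^ 2 / (4 * Kf ^ 2)) with hηdef
  have hη0 : 0 < η := by
    apply lt_min one_pos
    positivity
  set c : ℝ := min (Real.sqrt μ * γ) (α / (2 * Real.sqrt η)) with hcdef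
  have hc0 : 0 < c := by
    apply lt_min
    · positivity
    · positivity
  -- epsilon
  set G : Fin n → ℝ := fun i => if xbar i = 0 then θ else min |xbar i| (abs (|xbar i| - θ)) with hGdef
  set εs : Finset ℝ := insert θ (Finset.univ.image G) with hεs
  have hεsne : εs.Nonempty := ⟨θ, by simp [hεs]⟩
  set ε : ℝ := εs.min' hεsne with hεdef
  have hε0 : 0 < ε := by
    rw [hεdef, Finset.lt_min'_iff]
    intro y hy
    rw [hεs] at hy
    rcases Finset.mem_insert.mp hy with h | h
    · rw [h]; exact hθ
    · obtain ⟨i, _, hi⟩ := Finset.mem_image.mp h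
      rw [← hi, hGdef]
      by_cases h0 : xbar i = 0
      · simp [h0, hθ]
      · simp only [h0, if_false]
        apply lt_min
        · exact abs_pos.mpr h0
        · exact abs_pos.mpr (sub_ne_zero.mpr (FO i).1)
  have hεθ : ε ≤ θ := Finset.min'_le _ _ (by rw [hεs]; exact Finset.mem_insert_self _ _)
  have hεG : ∀ i, ε ≤ G i := fun i => Finset.min'_le _ _
    (by rw [hεs]; exact Finset.mem_insert_of_mem (Finset.mem_image.mpr ⟨i, Finset.mem_univ _, rfl⟩))
  refine ⟨c, hc0, ε, hε0, η, hη0, ?_⟩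
  intro x hxε hFlt hFlt2 ξ hξ
  have hξE : IsFrechetSubgradient (fun y : EuclideanSpace ℝ (Fin n) =>
      μ * ∑ j, (A.mulVec y j - b j) ^ 2 + lam * ∑ k, min |y k| θ) x ξ := hξ
  have hco : ∀ i, |x i - xbar i| < ε := by
    intro i
    have h1 := abs_coord_le_norm (x - xbar) i
    exact h1.trans_lt hxε
  -- regime facts
  have hreg1 : ∀ i, xbar i = 0 → |x i| < θ := by
    intro i h0
    have := hco i
    rw [h0, sub_zero] at this
    exact this.trans_le hεθ
  have hreg2 : ∀ i, xbar i ≠ 0 → |xbar i| < θ →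
      |x i| < θ ∧ (0 < x i ↔ 0 < xbar i) ∧ x i ≠ 0 := by
    intro i h0 hlt
    have hGi : G i = min |xbar i| (θ - |xbar i|) := by
      rw [hGdef]
      simp only [h0, if_false]
      rw [abs_of_neg (by linarith : |xbar i| - θ < 0)]
      ring_nf
    have hε1 : ε ≤ |xbar i| := (hεG i).trans (by rw [hGi]; exact min_le_left _ _)
    have hε2 : ε ≤ θ - |xbar i| := (hεG i).trans (by rw [hGi]; exact min_le_right _ _)
    have hd := hco i
    have habs : |x i| < θ := by
      have h3 : |x i| ≤ |xbar i| + |x i - xbar i| := by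
        have := abs_add_le (xbar i) (x i - xbar i)
        simpa using this
      linarith
    have hsign : (0 < x i ↔ 0 < xbar i) ∧ x i ≠ 0 := by
      rcases h0.lt_or_gt with hn | hp
      · have hxb : |xbar i| = -xbar i := abs_of_neg hn
        have hxi : x i < 0 := by
          cases abs_cases (x i - xbar i) with
          | inl h => linarith [h.1, hd]
          | inr h => linarith [h.1, hd]
        exact ⟨⟨fun h => absurd h (by linarith), fun h => absurd h (by linarith)⟩, hxi.ne⟩
      · have hxb : |xbar i| = xbar i := abs_of_pos hp
        have hxi : 0 < x i := by
          cases abs_cases (x i - xbar i) with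
          | inl h => linarith [h.1, hd]
          | inr h => linarith [h.1, hd]
        exact ⟨⟨fun _ => hp, fun _ => hxi⟩, hxi.ne'⟩
    exact ⟨habs, hsign⟩
  have hreg3 : ∀ i, θ < |xbar i| → θ < |x i| := by
    intro i hgt
    have h0 : xbar i ≠ 0 := by
      intro hc; rw [hc] at hgt; simp at hgt; linarith
    have hGi : G i ≤ |xbar i| - θ := by
      rw [hGdef]
      simp only [h0, if_false]
      refine (min_le_right _ _).trans ?_
      rw [abs_of_pos (by linarith : (0:ℝ) < |xbar i| - θ)]
    have hε2 : ε ≤ |xbar i| - θ := (hεG i).trans hGi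
    have hd := hco i
    have h3 : |xbar i| - |x i| ≤ |x i - xbar i| := by
      have := abs_sub_abs_le_abs_sub (xbar i) (x i)
      rw [abs_sub_comm] at this
      linarith
    linarith
  have hxθa : ∀ i, |x i| ≠ θ := by
    intro i
    by_cases h0 : xbar i = 0
    · exact (hreg1 i h0).ne
    · rcases lt_or_gt_of_ne (FO i).1 with hlt | hgt
      · exact (hreg2 i h0 hlt).1.ne
      · exact (hreg3 i hgt).ne'
  -- residual split
  have hmv : ∀ j, A.mulVec x j = A.mulVec xbar j + A.mulVec (x - xbar) j := by
    intro j
    have h : A.mulVec (xbar + (x - xbar)) = A.mulVec xbar + A.mulVec (x - xbar) :=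
      A.mulVec_add xbar (x - xbar)
    have h2 := congrFun h j
    simpa using h2
  have hξ0 : ∀ i, x i ≠ 0 → ξ i = g i + (2 * μ * ∑ j, (A.mulVec (x - xbar) j) * A j i)
      + lam * (if |x i| < θ then (if 0 < x i then 1 else -1) else 0) := by
    intro i hxi
    have hc := frechet_coord A b hμ.le hθ x ξ hξE i hxi (hxθa i)
    have hsp : ∑ j, (A.mulVec x j - b j) * A j i
        = (∑ j, (A.mulVec xbar j - b j) * A j i) + ∑ j, (A.mulVec (x - xbar) j) * A j i := by
      rw [← Finset.sum_add_distrib]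
      refine Finset.sum_congr rfl (fun j _ => ?_)
      rw [hmv j]; ring
    rw [hc, hsp]
    show 2 * μ * ((∑ j, (A.mulVec xbar j - b j) * A j i) + ∑ j, (A.mulVec (x - xbar) j) * A j i)
        + lam * _ = _
    rw [mul_add]
  -- xi on nonzero xbar coordinates
  have hw2 : ∀ i, xbar i ≠ 0 → ξ i = 2 * μ * ∑ j, (A.mulVec (x - xbar) j) * A j i := by
    intro i h0
    rcases lt_or_gt_of_ne (FO i).1 with hlt | hgt
    · have hr := hreg2 i h0 hlt
      rw [hξ0 i hr.2.2, if_pos hr.1]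
      have hsign : (if 0 < x i then (1:ℝ) else -1) = (if 0 < xbar i then 1 else -1) := by
        by_cases hp : 0 < xbar i
        · rw [if_pos (hr.2.1.mpr hp), if_pos hp]
        · rw [if_neg (fun hc => hp (hr.2.1.mp hc)), if_neg hp]
      rw [hsign]
      have hfo := (FO i).2.2.1 h0 hlt
      have hgi : g i = 2 * μ * ∑ j, (A.mulVec xbar j - b j) * A j i := rfl
      rw [hgi]
      linarith
    · have hx3 := hreg3 i hgt
      have hxne3 : x i ≠ 0 := by
        intro hc; rw [hc] at hx3; simp at hx3; linarith
      rw [hξ0 i hxne3, if_neg (not_lt.mpr hx3.le)]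
      have hfo := (FO i).2.2.2 hgt
      have hgi : g i = 2 * μ * ∑ j, (A.mulVec xbar j - b j) * A j i := rfl
      rw [hgi]
      linarith
  have hw1 : ∀ i, xbar i = 0 → x i ≠ 0 →
      ξ i = (2 * μ * ∑ j, (A.mulVec (x - xbar) j) * A j i)
        + (g i + lam * (if 0 < x i then 1 else -1)) := by
    intro i h0 hxi
    rw [hξ0 i hxi, if_pos (hreg1 i h0)]
    ring
  -- decomposition
  set Q0 : ℝ := ∑ j, (A.mulVec (x - xbar) j) ^ 2 with hQ0def
  have hQ0nn : 0 ≤ Q0 := Finset.sum_nonneg (fun j _ => sq_nonneg _)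
  have hm : ∀ i, (2 * μ * ∑ j, (A.mulVec xbar j - b j) * A j i) * (x i - xbar i)
      + lam * (min |x i| θ - min |xbar i| θ)
      = if xbar i = 0 then (g i * x i + lam * |x i|) else 0 := by
    intro i
    have hgi : g i = 2 * μ * ∑ j, (A.mulVec xbar j - b j) * A j i := rfl
    by_cases h0 : xbar i = 0
    · rw [if_pos h0, h0, sub_zero, min_eq_left (hreg1 i h0).le, ← hgi]
      simp [hθ.le]
    · rw [if_neg h0, ← hgi]
      rcases lt_or_gt_of_ne (FO i).1 with hlt | hgt
      · have hr := hreg2 i h0 hlt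
        rw [min_eq_left hr.1.le, min_eq_left hlt.le]
        have hfo := (FO i).2.2.1 h0 hlt
        rw [← hgi] at hfo
        by_cases hp : 0 < xbar i
        · rw [abs_of_pos (hr.2.1.mpr hp), abs_of_pos hp]
          rw [if_pos hp] at hfo
          have hval : g i = -lam := by linarith
          rw [hval]; ring
        · have hneg : xbar i < 0 := (not_lt.mp hp).lt_of_ne h0
          have hxneg : x i < 0 := by
            have := hr.2.1
            rcases hr.2.2.lt_or_gt with h | h
            · exact h
            · exact absurd (this.mp h) hp
          rw [abs_of_neg hxneg, abs_of_neg hneg]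
          rw [if_neg hp] at hfo
          have hval : g i = lam := by linarith
          rw [hval]; ring
      · have hx3 := hreg3 i hgt
        rw [min_eq_right hx3.le, min_eq_right hgt.le]
        have hfo := (FO i).2.2.2 hgt
        rw [← hgi] at hfo
        rw [hfo]; ring
  have hMsum : F x - F xbar = μ * Q0
      + ∑ i, (if xbar i = 0 then (g i * x i + lam * |x i|) else 0) := by
    have hD := I1 A b μ lam θ x xbar
    have hFx : F x = μ * ∑ j, (A.mulVec x j - b j) ^ 2 + lam * ∑ k, min |x k| θ := rfl
    have hFxb : F xbar = μ * ∑ j, (A.mulVec xbar j - b j) ^ 2 + lam * ∑ k, min |xbar k| θ := rfl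
    rw [hFx, hFxb, hD]
    have h1 : (∑ i, (2 * μ * ∑ j, (A.mulVec xbar j - b j) * A j i) * (x i - xbar i))
        + lam * ∑ i, (min |x i| θ - min |xbar i| θ)
        = ∑ i, (if xbar i = 0 then (g i * x i + lam * |x i|) else 0) := by
      rw [Finset.mul_sum, ← Finset.sum_add_distrib]
      exact Finset.sum_congr rfl (fun i _ => hm i)
    linarith
  have hMnn : 0 ≤ ∑ i, (if xbar i = 0 then (g i * x i + lam * |x i|) else 0) := by
    refine Finset.sum_nonneg (fun i _ => ?_)
    by_cases h0 : xbar i = 0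
    · rw [if_pos h0]
      have hb := (FO i).2.1 h0
      have hgi : g i = 2 * μ * ∑ j, (A.mulVec xbar j - b j) * A j i := rfl
      rw [← hgi] at hb
      have h1 : -(lam * |x i|) ≤ g i * x i := by
        have h2 : |g i * x i| ≤ lam * |x i| := by
          rw [abs_mul]
          exact mul_le_mul_of_nonneg_right hb (abs_nonneg _)
        linarith [neg_abs_le (g i * x i)]
      linarith
    · rw [if_neg h0]
  have hDQ : μ * Q0 ≤ F x - F xbar := by linarith
  have hDpos : 0 < F x - F xbar := by linarith
  have hDη : F x - F xbar < η := by linarith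
  by_cases hcase : ∃ i, xbar i = 0 ∧ x i ≠ 0 ∧ g i + lam * (if 0 < x i then 1 else -1) ≠ 0
  · obtain ⟨i, h0, hxi, hvne⟩ := hcase
    have hαv : α ≤ |g i + lam * (if 0 < x i then 1 else -1)| := by
      by_cases hp : 0 < x i
      · have := hαle i true (by simpa [hp] using hvne)
        simpa [hp] using this
      · have := hαle i false (by simpa [hp] using hvne)
        simpa [hp] using this
    have hri := hrb (x - xbar) i
    have hQ0μ : μ * Q0 < η := lt_of_le_of_lt hDQ hDη
    have hηle : η ≤ μ * α ^ 2 / (4 * Kf ^ 2) := min_le_right _ _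
    have hQ0le : Q0 ≤ (α / (2 * Kf)) ^ 2 := by
      have hid : (α / (2 * Kf)) ^ 2 = α ^ 2 / (4 * Kf ^ 2) := by
        field_simp; ring
      rw [hid]
      have h4 : μ * α ^ 2 / (4 * Kf ^ 2) = μ * (α ^ 2 / (4 * Kf ^ 2)) := by ring
      rw [h4] at hηle
      have h5 : μ * Q0 < μ * (α ^ 2 / (4 * Kf ^ 2)) := lt_of_lt_of_le hQ0μ hηle
      exact (lt_of_mul_lt_mul_left h5 hμ.le).le
    have hrbound : |2 * μ * ∑ j, (A.mulVec (x - xbar) j) * A j i| ≤ α / 2 := by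
      have hsq : Real.sqrt Q0 ≤ α / (2 * Kf) := by
        rw [show α / (2 * Kf) = Real.sqrt ((α / (2 * Kf)) ^ 2) from
          (Real.sqrt_sq (by positivity)).symm]
        exact Real.sqrt_le_sqrt hQ0le
      calc |2 * μ * ∑ j, (A.mulVec (x - xbar) j) * A j i|
          ≤ Kf * Real.sqrt Q0 := hri
        _ ≤ Kf * (α / (2 * Kf)) := mul_le_mul_of_nonneg_left hsq hKf0.le
        _ = α / 2 := by
            field_simp
    have hξi := hw1 i h0 hxi
    have hξlb : α / 2 ≤ |ξ i| := by
      rw [hξi]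
      set rr := 2 * μ * ∑ j, (A.mulVec (x - xbar) j) * A j i
      set vv := g i + lam * (if 0 < x i then 1 else -1)
      have h2 : |vv| ≤ |rr + vv| + |rr| := by
        have := abs_add_le (rr + vv) (-rr)
        simpa using this
      linarith
    have hnorm : |ξ i| ≤ ‖ξ‖ := abs_coord_le_norm ξ i
    have hrhs : c * Real.sqrt (F x - F xbar) ≤ α / 2 := by
      have h1 : Real.sqrt (F x - F xbar) ≤ Real.sqrt η := Real.sqrt_le_sqrt hDη.le
      have h2 : c ≤ α / (2 * Real.sqrt η) := min_le_right _ _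
      have hsη : (0:ℝ) < Real.sqrt η := Real.sqrt_pos.mpr hη0
      calc c * Real.sqrt (F x - F xbar)
          ≤ (α / (2 * Real.sqrt η)) * Real.sqrt η := by
            apply mul_le_mul h2 h1 (Real.sqrt_nonneg _) (by positivity)
        _ = α / 2 := by
            field_simp
    linarith
  · push_neg at hcase
    have hM0 : ∑ i, (if xbar i = 0 then (g i * x i + lam * |x i|) else 0) = 0 := by
      refine Finset.sum_eq_zero (fun i _ => ?_)
      by_cases h0 : xbar i = 0
      · rw [if_pos h0]
        by_cases hxi : x i = 0
        · rw [hxi]; simp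
        · have hv0 := hcase i h0 hxi
          by_cases hp : 0 < x i
          · rw [if_pos hp] at hv0
            rw [abs_of_pos hp]
            have hval : g i = -lam := by linarith
            rw [hval]; ring
          · rw [if_neg hp] at hv0
            have hneg : x i < 0 := (not_lt.mp hp).lt_of_ne hxi
            rw [abs_of_neg hneg]
            have hval : g i = lam := by linarith
            rw [hval]; ring
      · rw [if_neg h0]
    have hDQ0 : F x - F xbar = μ * Q0 := by
      rw [hMsum, hM0, add_zero]
    set S : Finset (Fin n) := Finset.univ.filter (fun i => xbar i ≠ 0 ∨ x i ≠ 0) with hS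
    have hsupp : ∀ i ∉ S, (x - xbar) i = 0 := by
      intro i hi
      rw [hS, Finset.mem_filter] at hi
      push_neg at hi
      have := hi (Finset.mem_univ i)
      show x i - xbar i = 0
      rw [this.1, this.2]
      ring
    have hγb := hγ S (x - xbar) hsupp
    have hξr : ∀ i ∈ S, ξ i = 2 * μ * ∑ j, (A.mulVec (x - xbar) j) * A j i := by
      intro i hi
      rw [hS, Finset.mem_filter] at hi
      rcases hi.2 with h0 | hxi
      · exact hw2 i h0
      · by_cases h0 : xbar i = 0
        · rw [hw1 i h0 hxi, hcase i h0 hxi, add_zero]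
        · exact hw2 i h0
    have hsum : (2 * μ * γ) ^ 2 * Q0 ≤ ∑ i ∈ S, (ξ i) ^ 2 := by
      have he : ∀ i ∈ S, (ξ i) ^ 2
          = (2 * μ) ^ 2 * (∑ j, (A.mulVec (x - xbar) j) * A j i) ^ 2 := by
        intro i hi
        rw [hξr i hi]; ring
      rw [Finset.sum_congr rfl he, ← Finset.mul_sum]
      have h1 := mul_le_mul_of_nonneg_left hγb (by positivity : (0:ℝ) ≤ (2 * μ) ^ 2)
      calc (2 * μ * γ) ^ 2 * Q0 = (2 * μ) ^ 2 * (γ ^ 2 * Q0) := by ring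
        _ ≤ (2 * μ) ^ 2 * ∑ i ∈ S, (∑ j, (A.mulVec (x - xbar) j) * A j i) ^ 2 := h1
    have hnorm2 : ∑ i ∈ S, (ξ i) ^ 2 ≤ ‖ξ‖ ^ 2 := by
      rw [enorm_sq]
      exact Finset.sum_le_sum_of_subset_of_nonneg (Finset.subset_univ S)
        (fun i _ _ => sq_nonneg _)
    have hc2 : c ^ 2 * (F x - F xbar) ≤ ‖ξ‖ ^ 2 := by
      rw [hDQ0]
      have hcle : c ≤ Real.sqrt μ * γ := min_le_left _ _
      have hcsq : c ^ 2 ≤ μ * γ ^ 2 := by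
        have h1 : c ^ 2 ≤ (Real.sqrt μ * γ) ^ 2 := by nlinarith [hc0.le]
        rw [mul_pow, Real.sq_sqrt hμ.le] at h1
        exact h1
      calc c ^ 2 * (μ * Q0) ≤ (μ * γ ^ 2) * (μ * Q0) :=
            mul_le_mul_of_nonneg_right hcsq (by positivity)
        _ ≤ (2 * μ * γ) ^ 2 * Q0 := by nlinarith [hQ0nn, hγ0, hμ]
        _ ≤ ∑ i ∈ S, (ξ i) ^ 2 := hsum
        _ ≤ ‖ξ‖ ^ 2 := hnorm2
    have hlhs0 : 0 ≤ c * Real.sqrt (F x - F xbar) := by positivity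
    have h1 : (c * Real.sqrt (F x - F xbar)) ^ 2 ≤ ‖ξ‖ ^ 2 := by
      rw [mul_pow, Real.sq_sqrt hDpos.le]
      exact hc2
    calc c * Real.sqrt (F x - F xbar)
        = Real.sqrt ((c * Real.sqrt (F x - F xbar)) ^ 2) := (Real.sqrt_sq hlhs0).symm
      _ ≤ Real.sqrt (‖ξ‖ ^ 2) := Real.sqrt_le_sqrt h1
      _ = ‖ξ‖ := Real.sqrt_sq (norm_nonneg ξ)
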